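/- Let G be a finite abelian group, H ≤ G a subgroup, and A ⊆ H. Then A tiles G by translation if and only if A tiles H by translation. -/

import Mathlib

/-- A finite subset `A` of an abelian group `G` tiles `G` by translation if there is a
set `T ⊆ G` such that every element of `G` is uniquely `a + t` with `a ∈ A`, `t ∈ T`. -/
def Tiles {G : Type*} [AddCommGroup G] (A : Finset G) : Prop :=
  ∃ T : Finset G, ∀ g : G, ∃! p : G × G, p.1 ∈ A ∧ p.2 ∈ T ∧ p.1 + p.2 = g

/-- For a subgroup `H` of a finite abelian group `G` and a finite set `A ⊆ H`,
`A` tiles `G` by translation if and only if it tiles `H` by translation. -/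
theorem tiles_subgroup_iff {G : Type*} [AddCommGroup G] [Fintype G]
    (H : AddSubgroup G) (A : Finset H) :
    Tiles (A.map ⟨((↑·) : H → G), Subtype.val_injective⟩) ↔ Tiles A := by
  classical
  constructor
  · rintro ⟨T, hT⟩
    refine ⟨T.preimage (↑·) Subtype.val_injective.injOn, fun h => ?_⟩
    obtain ⟨⟨a, t⟩, ⟨haA, htT, hat⟩, huniq⟩ := hT (h : G)
    obtain ⟨a', ha'A, ha'⟩ := Finset.mem_map.1 haA
    simp only [Function.Embedding.coeFn_mk] at ha'
    have hat' : a + t = (h : G) := hat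
    have htH : t ∈ H := by
      have ht : t = (h : G) - a := eq_sub_of_add_eq' hat'
      have haH : a ∈ H := ha' ▸ a'.2
      rw [ht]
      exact H.sub_mem h.2 haH
    refine ⟨(a', ⟨t, htH⟩), ⟨ha'A, by simpa using htT, ?_⟩, ?_⟩
    · apply Subtype.ext
      push_cast
      rw [ha']
      exact hat'
    · rintro ⟨b, s⟩ ⟨hbA, hsT, hbs⟩
      have key := huniq ((b : G), (s : G))
        ⟨Finset.mem_map.2 ⟨b, hbA, rfl⟩, by simpa using hsT, by
          rw [← hbs]; push_cast; ring⟩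
      have h1 : (b : G) = a := congrArg Prod.fst key
      have h2 : (s : G) = t := congrArg Prod.snd key
      refine Prod.ext (Subtype.ext ?_) (Subtype.ext ?_)
      · exact h1.trans ha'.symm
      · exact h2
  · rintro ⟨T, hT⟩
    refine ⟨(T ×ˢ (Finset.univ : Finset (G ⧸ H))).image
      (fun p => (p.1 : G) + Quotient.out p.2), fun g => ?_⟩
    set r : G := Quotient.out (QuotientAddGroup.mk (s := H) g) with hr
    have hgr : g - r ∈ H := by
      rw [← QuotientAddGroup.eq_iff_sub_mem, hr]
      exact (QuotientAddGroup.out_eq' _).symm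
    obtain ⟨⟨a, t⟩, ⟨haA, htT, hat⟩, huniq⟩ := hT ⟨g - r, hgr⟩
    refine ⟨((a : G), (t : G) + r), ⟨Finset.mem_map.2 ⟨a, haA, rfl⟩,
      Finset.mem_image.2 ⟨(t, QuotientAddGroup.mk g), by simp [htT], rfl⟩, ?_⟩, ?_⟩
    · have : ((a : G) + t) = g - r := congrArg Subtype.val hat
      rw [← add_assoc, this]; abel
    · rintro ⟨x, y⟩ ⟨hxA, hyT, hxy⟩
      obtain ⟨a', ha'A, ha'⟩ := Finset.mem_map.1 hxA
      simp only [Function.Embedding.coeFn_mk] at ha'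
      obtain ⟨⟨t', q⟩, hmem, hy⟩ := Finset.mem_image.1 hyT
      have ht'T : t' ∈ T := (Finset.mem_product.1 hmem).1
      have hgq : QuotientAddGroup.mk (s := H) g = q := by
        have heq : g - Quotient.out q = (a' : G) + t' := by
          rw [← hxy, ← ha', ← hy]; dsimp; abel
        have hmemH : g - Quotient.out q ∈ H := heq ▸ H.add_mem a'.2 t'.2
        rw [QuotientAddGroup.eq_iff_sub_mem.2 hmemH, QuotientAddGroup.out_eq']
      have hqout : Quotient.out q = r := by rw [hr, hgq]
      have hsum : a' + t' = ⟨g - r, hgr⟩ := by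
        apply Subtype.ext
        push_cast
        rw [← hxy, ← ha', ← hy]; dsimp; rw [hqout]; abel
      have key := huniq (a', t') ⟨ha'A, ht'T, hsum⟩
      have h1 : a' = a := congrArg Prod.fst key
      have h2 : t' = t := congrArg Prod.snd key
      refine Prod.ext ?_ ?_
      · rw [← ha', h1]
      · rw [← hy]; dsimp; rw [h2, hqout]
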